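/- For m > 0, τ > 0, d ≥ 0, r_r > 0, r_t > 0, let ď = d + r_r^{-1}, and consider the mode-0 closed-loop transfer function under iDroop with δ = τ^{-1} and ν = r_r^{-1} + r_t^{-1}: ĥ(s) = ĝ(s)/(1 − ĝ(s)ĉ(s)), where ĝ(s) = (τs+1)/(mτs² + (m+dτ)s + d + r_t^{-1}) and ĉ(s) = r_t^{-1}/(τs+1) − (r_r^{-1} + r_t^{-1}). Then ĥ(s) = 1/(ms + ď + r_t^{-1}), a first-order transfer function. -/
import Mathlib

theorem stmt19 (m τ d rr rt : ℝ) (hm : 0 < m) (hτ : 0 < τ) (hd : 0 ≤ d)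
    (hrr : 0 < rr) (hrt : 0 < rt) :
    let g : ℝ → ℝ := fun s => (τ * s + 1) / (m * τ * s ^ 2 + (m + d * τ) * s + d + rt⁻¹)
    let c : ℝ → ℝ := fun s => rt⁻¹ / (τ * s + 1) - (rr⁻¹ + rt⁻¹)
    ∀ s : ℝ, m * τ * s ^ 2 + (m + d * τ) * s + d + rt⁻¹ ≠ 0 → τ * s + 1 ≠ 0 →
      m * s + (d + rr⁻¹) + rt⁻¹ ≠ 0 →
      g s / (1 - g s * c s) = 1 / (m * s + (d + rr⁻¹) + rt⁻¹) := by
  intro g c s h1 h2 h3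
  set A := τ * s + 1 with hA
  set D := m * τ * s ^ 2 + (m + d * τ) * s + d + rt⁻¹ with hD
  set X := m * s + (d + rr⁻¹) + rt⁻¹ with hX
  have hgc : g s * c s = (rt⁻¹ - (rr⁻¹ + rt⁻¹) * A) / D := by
    show A / D * (rt⁻¹ / A - (rr⁻¹ + rt⁻¹)) = _
    rw [div_mul_eq_mul_div, mul_sub, mul_div_cancel₀ _ h2]
    ring_nf
  have key : 1 - g s * c s = A * X / D := by
    rw [hgc, eq_div_iff h1, sub_mul, div_mul_cancel₀ _ h1, hA, hX, hD]
    ring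
  show A / D / (1 - g s * c s) = 1 / X
  rw [key, div_div_div_cancel_right₀ h1, div_mul_cancel_left₀ h2, inv_eq_one_div]
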